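/- Let Q be a finite acyclic quiver that is topologically sorted in reverse order, let Q_1, …, Q_k be subquivers of Q, let l be the union over i of the sets of bipaths of the quivers induced by the Q_i (viewed as bipaths of Q), and let cl_Q(l) be the smallest path relation of Q containing l. If for every pair of vertices (u, v) of Q the multigraph G_{u,v} is connected, then cl_Q(l) = BP_Q, i.e., cl_Q(l) relates every pair of paths of Q with the same source and the same target. -/

import Mathlib

/-- A finite quiver: a number `n` of vertices (the vertex set being `{0, …, n-1}`)
together with a finite list of arcs, each arc a pair (source, target). -/
structure Quiv where
  nbVertex : ℕ
  arcs : List (ℕ × ℕ)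

/-- Well-formedness: all sources and targets are below the number of vertices. -/
def Quiv.Wellformed (Q : Quiv) : Prop :=
  ∀ a ∈ Q.arcs, a.1 < Q.nbVertex ∧ a.2 < Q.nbVertex

/-- A path from `u` to `v` in `Q` is a list of indices into `Q.arcs` selecting a chain
of consecutive arcs starting at `u` and ending at `v`. -/
inductive Quiv.IsPath (Q : Quiv) : ℕ → List ℕ → ℕ → Prop
  | nil (u : ℕ) : Quiv.IsPath Q u [] u
  | cons {u v w i : ℕ} {p : List ℕ} :
      Q.arcs[i]? = some (u, v) → Quiv.IsPath Q v p w → Quiv.IsPath Q u (i :: p) w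

/-- Acyclicity: there is no nonempty path from a vertex to itself
(equivalently, every path visits pairwise distinct vertices). -/
def Quiv.Acyclic (Q : Quiv) : Prop :=
  ∀ (u : ℕ) (p : List ℕ), p ≠ [] → ¬ Q.IsPath u p u

/-- `Q` is topologically sorted in reverse order: every arc `(s, t)` satisfies `s > t`. -/
def Quiv.TopSortedRev (Q : Quiv) : Prop :=
  ∀ a ∈ Q.arcs, a.2 < a.1

/-- A set of bipaths (pairs of paths with the same source and target), as a
quadruple relation: source, target, first path, second path. -/
abbrev BipathSet := ℕ → ℕ → List ℕ → List ℕ → Prop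

/-- The smallest path relation containing `l`: the closure of `l` under reflexivity,
symmetry, transitivity, and concatenation of paths. -/
inductive PathRelClosure (l : BipathSet) : ℕ → ℕ → List ℕ → List ℕ → Prop
  | base {u v : ℕ} {p q : List ℕ} : l u v p q → PathRelClosure l u v p q
  | refl (u v : ℕ) (p : List ℕ) : PathRelClosure l u v p p
  | symm {u v : ℕ} {p q : List ℕ} :
      PathRelClosure l u v p q → PathRelClosure l u v q p
  | trans {u v : ℕ} {p q r : List ℕ} :
      PathRelClosure l u v p q → PathRelClosure l u v q r → PathRelClosure l u v p r
  | comp {u v w : ℕ} {p p' q q' : List ℕ} :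
      PathRelClosure l u v p p' → PathRelClosure l v w q q' →
      PathRelClosure l u w (p ++ q) (p' ++ q')

/-- A subquiver: a selection of vertex labels and of arc indices. -/
structure Subquiv where
  vertices : List ℕ
  arcs : List ℕ

/-- Well-formedness of a subquiver of `Q`. -/
def Subquiv.Wf (S : Subquiv) (Q : Quiv) : Prop :=
  (∀ i ∈ S.arcs, i < Q.arcs.length) ∧ S.vertices.Nodup ∧
  (∀ x ∈ S.vertices, x < Q.nbVertex) ∧
  (∀ i ∈ S.arcs, ∀ a, Q.arcs[i]? = some a → a.1 ∈ S.vertices ∧ a.2 ∈ S.vertices)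

/-- A path of the quiver induced by the subquiver `S` of `Q`, viewed as a path of `Q`:
a path of `Q` whose endpoints are selected vertices of `S` and whose arcs are all
selected arcs of `S`. -/
def Subquiv.PathIn (S : Subquiv) (Q : Quiv) (u : ℕ) (p : List ℕ) (v : ℕ) : Prop :=
  Q.IsPath u p v ∧ u ∈ S.vertices ∧ v ∈ S.vertices ∧ ∀ i ∈ p, i ∈ S.arcs

/-- The union over the subquivers in `Qs` of the sets of bipaths of the induced
quivers, viewed as bipaths of `Q`. -/
def subBipaths (Q : Quiv) (Qs : List Subquiv) : BipathSet := fun u v p q =>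
  ∃ S ∈ Qs, S.PathIn Q u p v ∧ S.PathIn Q u q v

/-- Arcs adjacent to `u` starting a path from `u` to `v` in `Q`. -/
def ArcsFrom (Q : Quiv) (u v : ℕ) : Set ℕ := {e | ∃ p, Q.IsPath u (e :: p) v}

/-- Arcs adjacent to `v` ending a path from `u` to `v` in `Q`. -/
def ArcsTo (Q : Quiv) (v u : ℕ) : Set ℕ := {e | ∃ p, Q.IsPath u (p ++ [e]) v}

/-- `E_{u,v} = Arcs_from(u,v) ∪ Arcs_to(v,u)`. -/
def ESet (Q : Quiv) (u v : ℕ) : Set ℕ := ArcsFrom Q u v ∪ ArcsTo Q v u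

/-- The edge relation of the multigraph `G_{u,v}` on `E_{u,v}`: `e1` and `e2` are
related when either some path of `Q` from `u` to `v` contains both, or some subquiver
in `Qs` contains two paths from `u` to `v` containing respectively `e1` and `e2`. -/
def GEdge (Q : Quiv) (Qs : List Subquiv) (u v : ℕ) (e1 e2 : ℕ) : Prop :=
  e1 ∈ ESet Q u v ∧ e2 ∈ ESet Q u v ∧
  ((∃ p, Q.IsPath u p v ∧ e1 ∈ p ∧ e2 ∈ p) ∨
   (∃ S ∈ Qs, ∃ p1 p2, S.PathIn Q u p1 v ∧ S.PathIn Q u p2 v ∧ e1 ∈ p1 ∧ e2 ∈ p2))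

/-- Connectedness of the multigraph `G_{u,v}`: any two vertices of `G_{u,v}`
(i.e. elements of `E_{u,v}`) are joined by a path of edges. -/
def GConnected (Q : Quiv) (Qs : List Subquiv) (u v : ℕ) : Prop :=
  ∀ e1 ∈ ESet Q u v, ∀ e2 ∈ ESet Q u v, Relation.ReflTransGen (GEdge Q Qs u v) e1 e2

/-- Fullness of the relation `R_{u,v}` (w.r.t. the closure of the bipath set `l`):
for all `e1, e2 ∈ E_{u,v}`, every path from `u` to `v` containing `e1` is related
to every path from `u` to `v` containing `e2`. -/
def RFull (Q : Quiv) (l : BipathSet) (u v : ℕ) : Prop :=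
  ∀ e1 ∈ ESet Q u v, ∀ e2 ∈ ESet Q u v,
    ∀ p1 p2, Q.IsPath u p1 v → e1 ∈ p1 → Q.IsPath u p2 v → e2 ∈ p2 →
      PathRelClosure l u v p1 p2

lemma mem_of_getElem?' {α : Type*} {l : List α} {i : ℕ} {a : α}
    (h : l[i]? = some a) : a ∈ l := by
  obtain ⟨hlt, heq⟩ := List.getElem?_eq_some_iff.mp h
  exact heq ▸ List.getElem_mem hlt

lemma Quiv.IsPath.le {Q : Quiv} (htop : Q.TopSortedRev) :
    ∀ {u v : ℕ} {p : List ℕ}, Q.IsPath u p v → v ≤ u := by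
  intro u v p h
  induction h with
  | nil => exact le_refl _
  | @cons u' v' w' i' p' harc _ ih =>
    exact le_trans ih (le_of_lt (htop _ (mem_of_getElem?' harc)))

lemma Quiv.IsPath.split {Q : Quiv} :
    ∀ {u v : ℕ} {p : List ℕ} {e : ℕ}, Q.IsPath u p v → e ∈ p →
    ∃ a b r s, Q.arcs[e]? = some (a, b) ∧ p = r ++ e :: s ∧
      Q.IsPath u r a ∧ Q.IsPath b s v := by
  intro u v p e h he
  induction h with
  | nil => simp at he
  | @cons u' v' w' i' p' harc htail ih =>
    rcases List.mem_cons.mp he with rfl | hmem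
    · exact ⟨u', v', [], p', harc, rfl, Quiv.IsPath.nil u', htail⟩
    · obtain ⟨a, b, r, s, h1, h2, h3, h4⟩ := ih hmem
      exact ⟨a, b, i' :: r, s, h1, by rw [h2]; rfl, Quiv.IsPath.cons harc h3, h4⟩

lemma Quiv.IsPath.bounds {Q : Quiv} (hwf : Q.Wellformed) :
    ∀ {u v : ℕ} {p : List ℕ}, Q.IsPath u p v → p ≠ [] → u < Q.nbVertex ∧ v < Q.nbVertex := by
  intro u v p h
  induction h with
  | nil => intro h; exact absurd rfl h
  | @cons u' v' w' i' p' harc htail ih =>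
    intro _
    have hb := hwf _ (mem_of_getElem?' harc)
    refine ⟨hb.1, ?_⟩
    rcases p' with _ | ⟨j, p''⟩
    · cases htail; exact hb.2
    · exact (ih (by simp)).2

/-- Decision procedure correctness: if `G_{u,v}` is connected for every pair of
vertices `(u, v)` of `Q`, then `cl_Q(l)` relates every pair of paths of `Q` with the
same source and the same target, i.e. `cl_Q(l) = BP_Q`. -/
theorem closure_full_of_all_GConnected (Q : Quiv) (Qs : List Subquiv)
    (hwf : Q.Wellformed) (hsub : ∀ S ∈ Qs, S.Wf Q)
    (hacyc : Q.Acyclic) (htop : Q.TopSortedRev)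
    (hconn : ∀ u v, u < Q.nbVertex → v < Q.nbVertex → GConnected Q Qs u v) :
    ∀ u v p q, Q.IsPath u p v → Q.IsPath u q v →
      PathRelClosure (subBipaths Q Qs) u v p q := by
  suffices H : ∀ n u v p q, u - v < n → Q.IsPath u p v → Q.IsPath u q v →
      PathRelClosure (subBipaths Q Qs) u v p q by
    intro u v p q hp hq
    exact H (u - v + 1) u v p q (Nat.lt_succ_self _) hp hq
  intro n
  induction n with
  | zero => intro u v p q h; omega
  | succ n IH =>
    intro u v p q huv hp hq
    -- common arc lemma at span u - v
    have common : ∀ p1 p2 e, Q.IsPath u p1 v → Q.IsPath u p2 v → e ∈ p1 → e ∈ p2 →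
        PathRelClosure (subBipaths Q Qs) u v p1 p2 := by
      intro p1 p2 e hp1 hp2 he1 he2
      obtain ⟨a, b, r1, s1, harc, heq1, hr1, hs1⟩ := hp1.split he1
      obtain ⟨a', b', r2, s2, harc', heq2, hr2, hs2⟩ := hp2.split he2
      rw [harc] at harc'
      obtain ⟨rfl, rfl⟩ : a = a' ∧ b = b' := by
        simpa [Prod.ext_iff] using harc'
      have hba : b < a := htop _ (mem_of_getElem?' harc)
      have hau : a ≤ u := hr1.le htop
      have hvb : v ≤ b := hs1.le htop
      have hr : PathRelClosure (subBipaths Q Qs) u a r1 r2 := IH u a r1 r2 (by omega) hr1 hr2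
      have hs : PathRelClosure (subBipaths Q Qs) b v s1 s2 := IH b v s1 s2 (by omega) hs1 hs2
      have hmid : PathRelClosure (subBipaths Q Qs) a v (e :: s1) (e :: s2) :=
        PathRelClosure.comp (PathRelClosure.refl a b [e]) hs
      rw [heq1, heq2]
      exact PathRelClosure.comp hr hmid
    rcases p with _ | ⟨e1, p'⟩
    · have : v = u := by cases hp; rfl
      subst this
      have : q = [] := by
        by_contra h
        exact hacyc v q h hq
      subst this
      exact PathRelClosure.refl _ _ _
    · rcases q with _ | ⟨e2, q'⟩
      · have : v = u := by cases hq; rfl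
        subst this
        exact absurd hp (hacyc v (e1 :: p') (by simp))
      · have he1 : e1 ∈ ESet Q u v := Set.mem_union_left _ ⟨p', hp⟩
        have he2 : e2 ∈ ESet Q u v := Set.mem_union_left _ ⟨q', hq⟩
        have hb := hp.bounds hwf (by simp)
        have chain := hconn u v hb.1 hb.2 e1 he1 e2 he2
        have key : ∀ e2', Relation.ReflTransGen (GEdge Q Qs u v) e1 e2' →
            ∀ p2, Q.IsPath u p2 v → e2' ∈ p2 →
              PathRelClosure (subBipaths Q Qs) u v (e1 :: p') p2 := by
          intro e2' hchain
          induction hchain with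
          | refl =>
            intro p2 hp2 hm
            exact common _ _ e1 hp hp2 List.mem_cons_self hm
          | tail hab hedge IH2 =>
            intro p2 hp2 hm
            obtain ⟨_, _, hcase⟩ := hedge
            rcases hcase with ⟨r, hr, hm1, hm2⟩ | ⟨S, hS, q1, q2, hq1, hq2, hm1, hm2⟩
            · exact (IH2 r hr hm1).trans (common r p2 _ hr hp2 hm2 hm)
            · have h1 := IH2 q1 hq1.1 hm1
              have h2 : PathRelClosure (subBipaths Q Qs) u v q1 q2 :=
                PathRelClosure.base ⟨S, hS, hq1, hq2⟩
              exact (h1.trans h2).trans (common q2 p2 _ hq2.1 hp2 hm2 hm)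
        exact key e2 chain (e2 :: q') hq List.mem_cons_self
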